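/- Let a = x₀ < x₁ < ⋯ < xₙ = b be a partition of [a,b] with hᵢ = x_{i+1} - xᵢ, and let f have absolutely continuous derivative with f'' ∈ L^∞([a,b]). Define S̄(f,Iₙ) = (1/4)∑ᵢ [f(xᵢ)+f((3xᵢ+x_{i+1})/4)+f((xᵢ+3x_{i+1})/4)+f(x_{i+1})]hᵢ + (1/16)∑ᵢ [f'((3xᵢ+x_{i+1})/4) - f'((xᵢ+3x_{i+1})/4)]hᵢ². Then |∫_a^b f(x) dx - S̄(f,Iₙ)| ≤ (1/64)‖f''‖_∞ ∑ᵢ hᵢ³. -/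

import Mathlib

open MeasureTheory Set intervalIntegral



lemma pieceFTC (p q : ℝ) (hpq : p ≤ q) (K K' : ℝ → ℝ)
    (hK : ∀ t : ℝ, HasDerivAt K (K' t) t)
    (hK' : ∀ t : ℝ, HasDerivAt K' 1 t)
    (f f' f'' : ℝ → ℝ)
    (hf' : ∀ t ∈ Set.Icc p q, HasDerivAt f (f' t) t)
    (hf'' : ∀ t ∈ Set.Icc p q, HasDerivAt f' (f'' t) t)
    (hint : IntervalIntegrable f'' volume p q) :
    (∫ t in p..q, K t * f'' t)
      = (K q * f' q - K' q * f q) - (K p * f' p - K' p * f p) + ∫ t in p..q, f t := by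
  have huIcc : Set.uIcc p q = Set.Icc p q := Set.uIcc_of_le hpq
  have hKc : ContinuousOn K (Set.uIcc p q) := fun t _ => (hK t).continuousAt.continuousWithinAt
  have hfc : ContinuousOn f (Set.uIcc p q) := by
    rw [huIcc]; exact fun t ht => (hf' t ht).continuousAt.continuousWithinAt
  have hfint : IntervalIntegrable f volume p q := hfc.intervalIntegrable
  have hKf'' : IntervalIntegrable (fun t => K t * f'' t) volume p q :=
    hint.continuousOn_mul hKc
  have hG : ∀ t ∈ Set.uIcc p q,
      HasDerivAt (fun t => K t * f' t - K' t * f t) (K t * f'' t - f t) t := by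
    intro t ht
    rw [huIcc] at ht
    have hA := (hK t).mul (hf'' t ht)
    have hB := (hK' t).mul (hf' t ht)
    have := hA.sub hB
    refine this.congr_deriv ?_
    ring
  have key := intervalIntegral.integral_eq_sub_of_hasDerivAt hG (hKf''.sub hfint)
  rw [intervalIntegral.integral_sub hKf'' hfint] at key
  linarith

lemma kernel_bound (p q : ℝ) (hpq : p ≤ q) (K : ℝ → ℝ)
    (hKc : ContinuousOn K (Set.uIcc p q))
    (f'' : ℝ → ℝ) (M V : ℝ)
    (hint : IntervalIntegrable f'' volume p q)
    (hM : ∀ᵐ t ∂volume, t ∈ Set.Icc p q → |f'' t| ≤ M)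
    (hMnn : 0 ≤ M)
    (hV : (∫ t in p..q, |K t|) = V) :
    |∫ t in p..q, K t * f'' t| ≤ M * V := by
  have hKf'' : IntervalIntegrable (fun t => K t * f'' t) volume p q :=
    hint.continuousOn_mul hKc
  have habs : IntervalIntegrable (fun t => |K t * f'' t|) volume p q := hKf''.abs
  have hMK : IntervalIntegrable (fun t => M * |K t|) volume p q :=
    (hKc.abs.intervalIntegrable).const_mul M
  have h1 : |∫ t in p..q, K t * f'' t| ≤ ∫ t in p..q, |K t * f'' t| :=
    intervalIntegral.abs_integral_le_integral_abs hpq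
  have hae : ∀ᵐ t ∂(volume.restrict (Set.Icc p q)),
      |K t * f'' t| ≤ M * |K t| := by
    have := (ae_restrict_iff' (measurableSet_Icc (a := p) (b := q))).2 hM
    filter_upwards [this] with t ht
    calc |K t * f'' t| = |K t| * |f'' t| := abs_mul _ _
      _ ≤ |K t| * M := by
          exact mul_le_mul_of_nonneg_left ht (abs_nonneg _)
      _ = M * |K t| := mul_comm _ _
  have h2 : (∫ t in p..q, |K t * f'' t|) ≤ ∫ t in p..q, M * |K t| :=
    intervalIntegral.integral_mono_ae_restrict hpq habs hMK hae
  have h3 : (∫ t in p..q, M * |K t|) = M * V := by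
    rw [intervalIntegral.integral_const_mul, hV]
  linarith



lemma quad_step (c d : ℝ) (hcd : c < d) (f f' f'' : ℝ → ℝ) (M : ℝ)
    (hf' : ∀ t ∈ Set.Icc c d, HasDerivAt f (f' t) t)
    (hf'' : ∀ t ∈ Set.Icc c d, HasDerivAt f' (f'' t) t)
    (hint : IntervalIntegrable f'' volume c d)
    (hM : ∀ᵐ t ∂volume, t ∈ Set.Icc c d → |f'' t| ≤ M)
    (hM0 : 0 ≤ M) :
    |(∫ t in c..d, f t) -
      ((1/4) * (f c + f ((3*c+d)/4) + f ((c+3*d)/4) + f d) * (d - c)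
        + (1/16) * (f' ((3*c+d)/4) - f' ((c+3*d)/4)) * (d - c)^2)|
      ≤ (1/64) * M * (d - c)^3 := by
  set p : ℝ := (3*c+d)/4 with hp
  set q : ℝ := (c+3*d)/4 with hq
  have hcp : c < p := by rw [hp]; linarith
  have hpq : p < q := by rw [hp, hq]; linarith
  have hqd : q < d := by rw [hq]; linarith
  -- kernels
  set K1 : ℝ → ℝ := fun t => (t-c)^2/2 - (d-c)*(t-c)/4 with hK1def
  set K1' : ℝ → ℝ := fun t => (t-c) - (d-c)/4 with hK1'def
  set K2 : ℝ → ℝ := fun t => (t-(c+d)/2)^2/2 with hK2def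
  set K2' : ℝ → ℝ := fun t => t-(c+d)/2 with hK2'def
  set K3 : ℝ → ℝ := fun t => (d-t)^2/2 - (d-c)*(d-t)/4 with hK3def
  set K3' : ℝ → ℝ := fun t => -(d-t) + (d-c)/4 with hK3'def
  have hid : ∀ t : ℝ, HasDerivAt (fun s : ℝ => s - c) 1 t := fun t => (hasDerivAt_id t).sub_const c
  have hid2 : ∀ t : ℝ, HasDerivAt (fun s : ℝ => s - (c+d)/2) 1 t :=
    fun t => (hasDerivAt_id t).sub_const _
  have hid3 : ∀ t : ℝ, HasDerivAt (fun s : ℝ => d - s) (-1) t :=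
    fun t => (hasDerivAt_id t).const_sub d
  have hK1 : ∀ t : ℝ, HasDerivAt K1 (K1' t) t := by
    intro t
    have h2 := ((hid t).pow 2).div_const 2
    have h3 := ((hid t).const_mul (d-c)).div_const 4
    refine (h2.sub h3).congr_deriv ?_
    simp only [hK1'def]
    ring
  have hK1' : ∀ t : ℝ, HasDerivAt K1' 1 t := by
    intro t
    have := (hid t).sub_const ((d-c)/4)
    convert this using 1
  have hK2 : ∀ t : ℝ, HasDerivAt K2 (K2' t) t := by
    intro t
    have h2 := ((hid2 t).pow 2).div_const 2
    refine h2.congr_deriv ?_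
    simp only [hK2'def]
    ring
  have hK2' : ∀ t : ℝ, HasDerivAt K2' 1 t := fun t => hid2 t
  have hK3 : ∀ t : ℝ, HasDerivAt K3 (K3' t) t := by
    intro t
    have h2 := ((hid3 t).pow 2).div_const 2
    have h3 := ((hid3 t).const_mul (d-c)).div_const 4
    refine (h2.sub h3).congr_deriv ?_
    simp only [hK3'def]
    ring
  have hK3' : ∀ t : ℝ, HasDerivAt K3' 1 t := by
    intro t
    have := ((hid3 t).neg).add_const ((d-c)/4)
    refine this.congr_deriv ?_
    simp
  -- restrictions
  have hsub1 : Set.Icc c p ⊆ Set.Icc c d := Set.Icc_subset_Icc le_rfl (by linarith)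
  have hsub2 : Set.Icc p q ⊆ Set.Icc c d := Set.Icc_subset_Icc (by linarith) (by linarith)
  have hsub3 : Set.Icc q d ⊆ Set.Icc c d := Set.Icc_subset_Icc (by linarith) le_rfl
  have hu1 : Set.uIcc c p ⊆ Set.uIcc c d := by
    rw [Set.uIcc_of_le hcp.le, Set.uIcc_of_le hcd.le]; exact hsub1
  have hu2 : Set.uIcc p q ⊆ Set.uIcc c d := by
    rw [Set.uIcc_of_le hpq.le, Set.uIcc_of_le hcd.le]; exact hsub2
  have hu3 : Set.uIcc q d ⊆ Set.uIcc c d := by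
    rw [Set.uIcc_of_le hqd.le, Set.uIcc_of_le hcd.le]; exact hsub3
  have hint1 : IntervalIntegrable f'' volume c p := hint.mono_set hu1
  have hint2 : IntervalIntegrable f'' volume p q := hint.mono_set hu2
  have hint3 : IntervalIntegrable f'' volume q d := hint.mono_set hu3
  have hfc : ContinuousOn f (Set.uIcc c d) := by
    rw [Set.uIcc_of_le hcd.le]
    exact fun t ht => (hf' t ht).continuousAt.continuousWithinAt
  have hfint1 : IntervalIntegrable f volume c p := (hfc.mono hu1).intervalIntegrable
  have hfint2 : IntervalIntegrable f volume p q := (hfc.mono hu2).intervalIntegrable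
  have hfint3 : IntervalIntegrable f volume q d := (hfc.mono hu3).intervalIntegrable
  -- FTC identities
  have i1 := pieceFTC c p hcp.le K1 K1' hK1 hK1' f f' f''
    (fun t ht => hf' t (hsub1 ht)) (fun t ht => hf'' t (hsub1 ht)) hint1
  have i2 := pieceFTC p q hpq.le K2 K2' hK2 hK2' f f' f''
    (fun t ht => hf' t (hsub2 ht)) (fun t ht => hf'' t (hsub2 ht)) hint2
  have i3 := pieceFTC q d hqd.le K3 K3' hK3 hK3' f f' f''
    (fun t ht => hf' t (hsub3 ht)) (fun t ht => hf'' t (hsub3 ht)) hint3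
  have hsplit : (∫ t in c..p, f t) + (∫ t in p..q, f t) + (∫ t in q..d, f t)
      = ∫ t in c..d, f t := by
    rw [intervalIntegral.integral_add_adjacent_intervals hfint1 hfint2,
        intervalIntegral.integral_add_adjacent_intervals (hfint1.trans hfint2) hfint3]
  -- the key identity
  have key : (∫ t in c..d, f t) -
      ((1/4) * (f c + f ((3*c+d)/4) + f ((c+3*d)/4) + f d) * (d - c)
        + (1/16) * (f' ((3*c+d)/4) - f' ((c+3*d)/4)) * (d - c)^2)
      = (∫ t in c..p, K1 t * f'' t) + (∫ t in p..q, K2 t * f'' t)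
        + (∫ t in q..d, K3 t * f'' t) := by
    rw [i1, i2, i3, ← hsplit]
    simp only [hK1def, hK1'def, hK2def, hK2'def, hK3def, hK3'def, hp, hq]
    ring
  rw [key]
  -- kernel integrals
  have hK1cont : Continuous K1 := continuous_iff_continuousAt.2 fun t => (hK1 t).continuousAt
  have hK2cont : Continuous K2 := continuous_iff_continuousAt.2 fun t => (hK2 t).continuousAt
  have hK3cont : Continuous K3 := continuous_iff_continuousAt.2 fun t => (hK3 t).continuousAt
  have v1 : (∫ t in c..p, |K1 t|) = (d-c)^3/192 := by
    have sgn : Set.EqOn (fun t => |K1 t|) (fun t => -(K1 t)) (Set.uIcc c p) := by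
      intro t ht
      rw [Set.uIcc_of_le hcp.le] at ht
      have h1 : c ≤ t := ht.1
      have h2 : t ≤ p := ht.2
      have : K1 t ≤ 0 := by
        simp only [hK1def, hp] at *
        nlinarith
      simpa using abs_of_nonpos this
    rw [intervalIntegral.integral_congr sgn, intervalIntegral.integral_neg]
    have hd : ∀ t ∈ Set.uIcc c p,
        HasDerivAt (fun t => (t-c)^3/6 - (d-c)*(t-c)^2/8) (K1 t) t := by
      intro t _
      have h2 := ((hid t).pow 3).div_const 6
      have h3 := (((hid t).pow 2).const_mul (d-c)).div_const 8
      refine (h2.sub h3).congr_deriv ?_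
      simp only [hK1def]
      ring
    rw [intervalIntegral.integral_eq_sub_of_hasDerivAt hd (hK1cont.intervalIntegrable c p)]
    simp only [hp]
    ring
  have v2 : (∫ t in p..q, |K2 t|) = (d-c)^3/192 := by
    have sgn : Set.EqOn (fun t => |K2 t|) K2 (Set.uIcc p q) := by
      intro t _
      have : 0 ≤ K2 t := by simp only [hK2def]; positivity
      simpa using abs_of_nonneg this
    rw [intervalIntegral.integral_congr sgn]
    have hd : ∀ t ∈ Set.uIcc p q,
        HasDerivAt (fun t => (t-(c+d)/2)^3/6) (K2 t) t := by
      intro t _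
      have h2 := ((hid2 t).pow 3).div_const 6
      refine h2.congr_deriv ?_
      simp only [hK2def]
      ring
    rw [intervalIntegral.integral_eq_sub_of_hasDerivAt hd (hK2cont.intervalIntegrable p q)]
    simp only [hp, hq]
    ring
  have v3 : (∫ t in q..d, |K3 t|) = (d-c)^3/192 := by
    have sgn : Set.EqOn (fun t => |K3 t|) (fun t => -(K3 t)) (Set.uIcc q d) := by
      intro t ht
      rw [Set.uIcc_of_le hqd.le] at ht
      have h1 : q ≤ t := ht.1
      have h2 : t ≤ d := ht.2
      have : K3 t ≤ 0 := by
        simp only [hK3def, hq] at *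
        nlinarith
      simpa using abs_of_nonpos this
    rw [intervalIntegral.integral_congr sgn, intervalIntegral.integral_neg]
    have hd : ∀ t ∈ Set.uIcc q d,
        HasDerivAt (fun t => -((d-t)^3/6 - (d-c)*(d-t)^2/8)) (K3 t) t := by
      intro t _
      have h2 := ((hid3 t).pow 3).div_const 6
      have h3 := (((hid3 t).pow 2).const_mul (d-c)).div_const 8
      refine ((h2.sub h3).neg).congr_deriv ?_
      simp only [hK3def]
      ring
    rw [intervalIntegral.integral_eq_sub_of_hasDerivAt hd (hK3cont.intervalIntegrable q d)]
    simp only [hq]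
    ring
  -- bounds
  have hM1 : ∀ᵐ t ∂volume, t ∈ Set.Icc c p → |f'' t| ≤ M := by
    filter_upwards [hM] with t ht hmem; exact ht (hsub1 hmem)
  have hM2 : ∀ᵐ t ∂volume, t ∈ Set.Icc p q → |f'' t| ≤ M := by
    filter_upwards [hM] with t ht hmem; exact ht (hsub2 hmem)
  have hM3 : ∀ᵐ t ∂volume, t ∈ Set.Icc q d → |f'' t| ≤ M := by
    filter_upwards [hM] with t ht hmem; exact ht (hsub3 hmem)
  have b1 := kernel_bound c p hcp.le K1
    (fun t _ => (hK1 t).continuousAt.continuousWithinAt) f'' M ((d-c)^3/192) hint1 hM1 hM0 v1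
  have b2 := kernel_bound p q hpq.le K2
    (fun t _ => (hK2 t).continuousAt.continuousWithinAt) f'' M ((d-c)^3/192) hint2 hM2 hM0 v2
  have b3 := kernel_bound q d hqd.le K3
    (fun t _ => (hK3 t).continuousAt.continuousWithinAt) f'' M ((d-c)^3/192) hint3 hM3 hM0 v3
  calc |(∫ t in c..p, K1 t * f'' t) + (∫ t in p..q, K2 t * f'' t) + (∫ t in q..d, K3 t * f'' t)|
      ≤ |∫ t in c..p, K1 t * f'' t| + |∫ t in p..q, K2 t * f'' t| + |∫ t in q..d, K3 t * f'' t| := by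
        exact (abs_add_le _ _).trans (by gcongr; exact abs_add_le _ _)
    _ ≤ M * ((d-c)^3/192) + M * ((d-c)^3/192) + M * ((d-c)^3/192) := by linarith
    _ = (1/64) * M * (d - c)^3 := by ring



theorem composite_quadrature_best
    (a b : ℝ) (hab : a < b) (n : ℕ) (x : ℕ → ℝ)
    (hx0 : x 0 = a) (hxn : x n = b)
    (hmono : ∀ i < n, x i < x (i + 1))
    (f f' f'' : ℝ → ℝ) (M : ℝ)
    (hf' : ∀ t ∈ Icc a b, HasDerivAt f (f' t) t)
    (hf'' : ∀ t ∈ Icc a b, HasDerivAt f' (f'' t) t)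
    (hint : IntervalIntegrable f'' volume a b)
    (hM : ∀ᵐ t ∂volume, t ∈ Icc a b → |f'' t| ≤ M) :
    |(∫ t in a..b, f t)
      - ((1/4) * ∑ i ∈ Finset.range n,
           (f (x i) + f ((3 * x i + x (i + 1)) / 4)
             + f ((x i + 3 * x (i + 1)) / 4) + f (x (i + 1)))
             * (x (i + 1) - x i)
         + (1/16) * ∑ i ∈ Finset.range n,
             (f' ((3 * x i + x (i + 1)) / 4) - f' ((x i + 3 * x (i + 1)) / 4))
               * (x (i + 1) - x i)^2)|
    ≤ (1/64) * M * ∑ i ∈ Finset.range n, (x (i + 1) - x i)^3 := by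
  -- M is nonnegative
  have hM0 : 0 ≤ M := by
    by_contra h
    push_neg at h
    have h1 : ∀ᵐ t ∂volume, t ∉ Icc a b := by
      filter_upwards [hM] with t ht hmem
      have := ht hmem
      have := abs_nonneg (f'' t)
      linarith
    have h2 : volume {t : ℝ | a ≤ t ∧ t ≤ b} = 0 := by
      rw [ae_iff] at h1
      simpa using h1
    rw [show {t : ℝ | a ≤ t ∧ t ≤ b} = Set.Icc a b from rfl, Real.volume_Icc] at h2
    rw [ENNReal.ofReal_eq_zero] at h2
    linarith
  -- monotonicity of the partition
  have hmono' : ∀ i j : ℕ, i ≤ j → j ≤ n → x i ≤ x j := by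
    intro i j hij hjn
    induction j with
    | zero =>
      have : i = 0 := Nat.le_zero.mp hij
      simp [this]
    | succ k ih =>
      rcases Nat.lt_or_ge i (k+1) with h | h
      · have hkn : k ≤ n := le_trans (Nat.le_succ k) hjn
        have h1 : x i ≤ x k := ih (Nat.lt_succ_iff.mp h) hkn
        have h2 : x k < x (k+1) := hmono k (Nat.lt_of_lt_of_le (Nat.lt_succ_self k) hjn)
        linarith
      · have : i = k+1 := le_antisymm hij h
        simp [this]
  have hbnd : ∀ i ≤ n, x i ∈ Icc a b := by
    intro i hi
    constructor
    · rw [← hx0]; exact hmono' 0 i (Nat.zero_le i) hi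
    · rw [← hxn]; exact hmono' i n hi le_rfl
  have hsubI : ∀ i < n, Icc (x i) (x (i+1)) ⊆ Icc a b := by
    intro i hi
    exact Set.Icc_subset_Icc (hbnd i hi.le).1 (hbnd (i+1) hi).2
  have huI : ∀ i < n, Set.uIcc (x i) (x (i+1)) ⊆ Set.uIcc a b := by
    intro i hi
    rw [Set.uIcc_of_le (hmono i hi).le, Set.uIcc_of_le hab.le]
    exact hsubI i hi
  have hfc : ContinuousOn f (Set.uIcc a b) := by
    rw [Set.uIcc_of_le hab.le]
    exact fun t ht => (hf' t ht).continuousAt.continuousWithinAt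
  have hfint : ∀ i < n, IntervalIntegrable f volume (x i) (x (i+1)) :=
    fun i hi => ((hfc.mono (huI i hi))).intervalIntegrable
  have hsum : ∑ i ∈ Finset.range n, ∫ t in (x i)..(x (i+1)), f t = ∫ t in a..b, f t := by
    have := intervalIntegral.sum_integral_adjacent_intervals (a := x) (n := n)
      (μ := volume) (f := f) hfint
    rwa [hx0, hxn] at this
  -- rewrite everything as a single sum
  set Q : ℕ → ℝ := fun i =>
    (1/4) * (f (x i) + f ((3 * x i + x (i + 1)) / 4)
      + f ((x i + 3 * x (i + 1)) / 4) + f (x (i + 1))) * (x (i + 1) - x i)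
    + (1/16) * (f' ((3 * x i + x (i + 1)) / 4) - f' ((x i + 3 * x (i + 1)) / 4))
      * (x (i + 1) - x i)^2 with hQ
  have hRW : (∫ t in a..b, f t)
      - ((1/4) * ∑ i ∈ Finset.range n,
           (f (x i) + f ((3 * x i + x (i + 1)) / 4)
             + f ((x i + 3 * x (i + 1)) / 4) + f (x (i + 1)))
             * (x (i + 1) - x i)
         + (1/16) * ∑ i ∈ Finset.range n,
             (f' ((3 * x i + x (i + 1)) / 4) - f' ((x i + 3 * x (i + 1)) / 4))
               * (x (i + 1) - x i)^2)
      = ∑ i ∈ Finset.range n, ((∫ t in (x i)..(x (i+1)), f t) - Q i) := by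
    rw [Finset.sum_sub_distrib, hsum, Finset.mul_sum, Finset.mul_sum,
      ← Finset.sum_add_distrib]
    congr 1
    apply Finset.sum_congr rfl
    intro i _
    simp only [hQ]
    ring
  rw [hRW]
  calc |∑ i ∈ Finset.range n, ((∫ t in (x i)..(x (i+1)), f t) - Q i)|
      ≤ ∑ i ∈ Finset.range n, |(∫ t in (x i)..(x (i+1)), f t) - Q i| :=
        Finset.abs_sum_le_sum_abs _ _
    _ ≤ ∑ i ∈ Finset.range n, (1/64) * M * (x (i+1) - x i)^3 := by
        apply Finset.sum_le_sum
        intro i hi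
        have hi' := Finset.mem_range.mp hi
        have := quad_step (x i) (x (i+1)) (hmono i hi') f f' f'' M
          (fun t ht => hf' t (hsubI i hi' ht))
          (fun t ht => hf'' t (hsubI i hi' ht))
          (hint.mono_set (huI i hi'))
          (by filter_upwards [hM] with t ht hmem; exact ht (hsubI i hi' hmem))
          hM0
        simpa [hQ] using this
    _ = (1/64) * M * ∑ i ∈ Finset.range n, (x (i + 1) - x i)^3 := by
        rw [← Finset.mul_sum]
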